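/- For every integer n ≥ 3, the graph Kₙ × K₂ is type I, i.e., χ''(Kₙ × K₂) = n, where Δ(Kₙ × K₂) = n − 1. -/

import Mathlib

open SimpleGraph

variable {V : Type*} {W : Type*}

/-- The direct (tensor) product of two simple graphs. -/
def tensorProd (G : SimpleGraph V) (H : SimpleGraph W) : SimpleGraph (V × W) where
  Adj a b := G.Adj a.1 b.1 ∧ H.Adj a.2 b.2
  symm := ⟨fun _ _ h => ⟨G.adj_symm h.1, H.adj_symm h.2⟩⟩
  loopless := ⟨fun a h => G.irrefl h.1⟩

instance tensorProd.adjDecidable (G : SimpleGraph V) (H : SimpleGraph W)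
    [DecidableRel G.Adj] [DecidableRel H.Adj] : DecidableRel (tensorProd G H).Adj :=
  fun a b => inferInstanceAs (Decidable (G.Adj a.1 b.1 ∧ H.Adj a.2 b.2))

/-- A proper edge colouring with `n` colours, given as a symmetric function on adjacent pairs. -/
def IsEdgeColoring (G : SimpleGraph V) (n : ℕ) (ce : V → V → Fin n) : Prop :=
  (∀ u v, G.Adj u v → ce u v = ce v u) ∧
  (∀ u v w, G.Adj u v → G.Adj u w → v ≠ w → ce u v ≠ ce u w)

/-- A proper total colouring with `n` colours. -/
def IsTotalColoring (G : SimpleGraph V) (n : ℕ) (cv : V → Fin n) (ce : V → V → Fin n) : Prop :=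
  (∀ u v, G.Adj u v → ce u v = ce v u) ∧
  (∀ u v, G.Adj u v → cv u ≠ cv v) ∧
  (∀ u v w, G.Adj u v → G.Adj u w → v ≠ w → ce u v ≠ ce u w) ∧
  (∀ u v, G.Adj u v → ce u v ≠ cv u ∧ ce u v ≠ cv v)

/-- The total chromatic number of a graph. -/
noncomputable def totalChromaticNumber (G : SimpleGraph V) : ℕ :=
  sInf {n | ∃ cv ce, IsTotalColoring G n cv ce}

/-- Adjacency of the crown graph. -/
def crownAdj {m : ℕ} : Fin m ⊕ Fin m → Fin m ⊕ Fin m → Prop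
  | Sum.inl k, Sum.inr t => k ≠ t
  | Sum.inr k, Sum.inl t => k ≠ t
  | _, _ => False

/-- The crown graph `J_{2m}`: `K_{m,m}` minus a perfect matching. -/
def crown (m : ℕ) : SimpleGraph (Fin m ⊕ Fin m) where
  Adj := crownAdj
  symm := ⟨by rintro (k|k) (t|t) h <;> simp only [crownAdj] at * <;> exact fun e => h e.symm⟩
  loopless := ⟨by rintro (k|k) h <;> simp only [crownAdj] at h⟩

instance crown.adjDecidable (m : ℕ) : DecidableRel (crown m).Adj := fun a b =>
  match a, b with
  | Sum.inl k, Sum.inr t => (inferInstance : Decidable (k ≠ t))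
  | Sum.inr k, Sum.inl t => (inferInstance : Decidable (k ≠ t))
  | Sum.inl _, Sum.inl _ => isFalse (fun h => h)
  | Sum.inr _, Sum.inr _ => isFalse (fun h => h)

/-! ### Auxiliary material for the proof -/

section GoodF

/-- An "off-diagonal idempotent Latin square" condition: enough to edge-colour the crown. -/
def GoodF {α : Type*} (f : α → α → α) : Prop :=
  (∀ a b, a ≠ b → f a b ≠ a ∧ f a b ≠ b) ∧
  (∀ a b b', b ≠ a → b' ≠ a → b ≠ b' → f a b ≠ f a b') ∧
  (∀ a a' b, a ≠ b → a' ≠ b → a ≠ a' → f a b ≠ f a' b)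

lemma GoodF.transport {α β : Type*} (e : β ≃ α) {f : α → α → α} (hf : GoodF f) :
    GoodF (fun x y => e.symm (f (e x) (e y))) := by
  obtain ⟨h1, h2, h3⟩ := hf
  refine ⟨fun a b hab => ?_, fun a b b' h h' hbb' => ?_, fun a a' b h h' haa' => ?_⟩
  · obtain ⟨p, q⟩ := h1 (e a) (e b) (fun hh => hab (e.injective hh))
    constructor
    · intro hh; exact p (by simpa using congrArg e hh)
    · intro hh; exact q (by simpa using congrArg e hh)
  · intro hh
    exact h2 (e a) (e b) (e b') (fun z => h (e.injective z)) (fun z => h' (e.injective z))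
      (fun z => hbb' (e.injective z)) (e.symm.injective hh)
  · intro hh
    exact h3 (e a) (e a') (e b) (fun z => h (e.injective z)) (fun z => h' (e.injective z))
      (fun z => haa' (e.injective z)) (e.symm.injective hh)

lemma goodF_zmod_odd (m : ℕ) (hm : Odd m) :
    ∃ f : ZMod m → ZMod m → ZMod m, GoodF f := by
  have hu : IsUnit (2 : ZMod m) := by
    have : ((2 : ℕ) : ZMod m) = (2 : ZMod m) := by norm_num
    rw [← this]
    exact (ZMod.isUnit_iff_coprime 2 m).mpr (Nat.coprime_two_left.mpr hm)
  obtain ⟨u, hu2⟩ := hu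
  set i2 : ZMod m := ↑u⁻¹ with hi2
  have key : ∀ x : ZMod m, x * i2 * 2 = x := by
    intro x
    rw [mul_assoc, ← hu2, hi2]
    simp
  have cancel : ∀ x y : ZMod m, x * i2 = y * i2 → x = y := by
    intro x y h
    have := congrArg (· * (2 : ZMod m)) h
    simpa [key] using this
  have half : ∀ x : ZMod m, (x + x) * i2 = x := by
    intro x
    have hx2 : x + x = x * 2 := by ring
    calc (x + x) * i2 = x * 2 * i2 := by rw [hx2]
      _ = x * (2 * i2) := by ring
      _ = x * (↑u * ↑u⁻¹) := by rw [hu2, hi2]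
      _ = x := by simp
  refine ⟨fun a b => (a + b) * i2, fun a b hab => ?_, fun a b b' _ _ hbb' => ?_,
    fun a a' b _ _ haa' => ?_⟩
  · constructor
    · intro hh
      replace hh : (a + b) * i2 = a := hh
      apply hab
      have h1 : (a + b) * i2 = (a + a) * i2 := by rw [hh, half]
      exact (add_left_cancel (cancel _ _ h1)).symm
    · intro hh
      replace hh : (a + b) * i2 = b := hh
      apply hab
      have h1 : (a + b) * i2 = (b + b) * i2 := by rw [hh, half]
      exact add_right_cancel (cancel _ _ h1)
  · intro hh
    replace hh : (a + b) * i2 = (a + b') * i2 := hh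
    exact hbb' (add_left_cancel (cancel _ _ hh))
  · intro hh
    replace hh : (a + b) * i2 = (a' + b) * i2 := hh
    exact haa' (add_right_cancel (cancel _ _ hh))

lemma goodF_even (m : ℕ) (hm : Odd m) (h3 : 3 ≤ m) :
    ∃ F : Option (ZMod m) → Option (ZMod m) → Option (ZMod m), GoodF F := by
  haveI : NeZero m := ⟨by omega⟩
  haveI : Fact (1 < m) := ⟨by omega⟩
  have hu : IsUnit (2 : ZMod m) := by
    have : ((2 : ℕ) : ZMod m) = (2 : ZMod m) := by norm_num
    rw [← this]
    exact (ZMod.isUnit_iff_coprime 2 m).mpr (Nat.coprime_two_left.mpr hm)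
  obtain ⟨u, hu2⟩ := hu
  set i2 : ZMod m := ↑u⁻¹ with hi2
  have key : ∀ x : ZMod m, x * i2 * 2 = x := by
    intro x
    rw [mul_assoc, ← hu2, hi2]
    simp
  have cancel : ∀ x y : ZMod m, x * i2 = y * i2 → x = y := by
    intro x y h
    have := congrArg (· * (2 : ZMod m)) h
    simpa [key] using this
  have half : ∀ x : ZMod m, (x + x) * i2 = x := by
    intro x
    have hx2 : x + x = x * 2 := by ring
    calc (x + x) * i2 = x * 2 * i2 := by rw [hx2]
      _ = x * (2 * i2) := by ring
      _ = x * (↑u * ↑u⁻¹) := by rw [hu2, hi2]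
      _ = x := by simp
  refine ⟨fun x y => match x, y with
    | some a, some b => if b = a + 2 then none else some ((a + b) * i2)
    | some a, none => some (a + 1)
    | none, some b => some (b - 1)
    | none, none => none, ?_, ?_, ?_⟩
  · rintro (_ | a) (_ | b) hab <;> dsimp only
    · exact absurd rfl hab
    · refine ⟨by simp, ?_⟩
      simp only [ne_eq, Option.some.injEq]
      intro hh
      exact one_ne_zero (sub_eq_self.mp hh)
    · refine ⟨?_, by simp⟩
      simp only [ne_eq, Option.some.injEq]
      intro hh
      have h1 : a + 1 = a + 0 := by rw [add_zero]; exact hh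
      exact one_ne_zero (add_left_cancel h1)
    · have hab' : a ≠ b := fun hh => hab (by rw [hh])
      split_ifs with hc
      · exact ⟨by simp, by simp⟩
      · constructor
        · simp only [ne_eq, Option.some.injEq]
          intro hh
          apply hab'
          have h1 : (a + b) * i2 = (a + a) * i2 := by rw [hh, half]
          exact (add_left_cancel (cancel _ _ h1)).symm
        · simp only [ne_eq, Option.some.injEq]
          intro hh
          apply hab'
          have h1 : (a + b) * i2 = (b + b) * i2 := by rw [hh, half]
          exact add_right_cancel (cancel _ _ h1)
  · rintro (_ | a) (_ | b) (_ | b') h h' hbb' <;> dsimp only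
    · exact absurd rfl hbb'
    · exact absurd rfl h
    · exact absurd rfl h'
    · simp only [ne_eq, Option.some.injEq]
      intro hh
      exact hbb' (by rw [Option.some_inj]; exact sub_left_inj.mp hh)
    · exact absurd rfl hbb'
    · split_ifs with hc
      · simp
      · simp only [ne_eq, Option.some.injEq]
        intro hh
        apply hc
        have h1 : (a + b') * i2 = ((a + 1) + (a + 1)) * i2 := by rw [← hh, half]
        have h2 := cancel _ _ h1
        have h4 : a + b' = a + (a + 2) := by rw [h2]; ring
        exact add_left_cancel h4
    · split_ifs with hc
      · simp
      · simp only [ne_eq, Option.some.injEq]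
        intro hh
        apply hc
        have h1 : (a + b) * i2 = ((a + 1) + (a + 1)) * i2 := by rw [hh, half]
        have h2 := cancel _ _ h1
        have h4 : a + b = a + (a + 2) := by rw [h2]; ring
        exact add_left_cancel h4
    · split_ifs with hc hc'
      · exact absurd (Option.some_inj.mpr (hc.trans hc'.symm)) hbb'
      · simp
      · simp
      · simp only [ne_eq, Option.some.injEq]
        intro hh
        exact hbb' (Option.some_inj.mpr (add_left_cancel (cancel _ _ hh)))
  · rintro (_ | a) (_ | a') (_ | b) h h' haa' <;> dsimp only
    · exact absurd rfl haa'
    · exact absurd rfl haa'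
    · exact absurd rfl h
    · split_ifs with hc
      · simp
      · simp only [ne_eq, Option.some.injEq]
        intro hh
        apply hc
        have h1 : (a' + b) * i2 = ((b - 1) + (b - 1)) * i2 := by rw [← hh, half]
        have h2 := cancel _ _ h1
        have h4 : a' + b = (b - 2) + b := by rw [h2]; ring
        have h5 := add_right_cancel h4
        rw [h5]; ring
    · exact absurd rfl h'
    · split_ifs with hc
      · simp
      · simp only [ne_eq, Option.some.injEq]
        intro hh
        apply hc
        have h1 : (a + b) * i2 = ((b - 1) + (b - 1)) * i2 := by rw [hh, half]
        have h2 := cancel _ _ h1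
        have h4 : a + b = (b - 2) + b := by rw [h2]; ring
        have h5 := add_right_cancel h4
        rw [h5]; ring
    · simp only [ne_eq, Option.some.injEq]
      intro hh
      exact haa' (Option.some_inj.mpr (add_right_cancel hh))
    · split_ifs with hc hc'
      · intro _
        apply haa'
        rw [Option.some_inj]
        have h4 : a + 2 = a' + 2 := by rw [← hc, ← hc']
        exact add_right_cancel h4
      · simp
      · simp
      · simp only [ne_eq, Option.some.injEq]
        intro hh
        exact haa' (Option.some_inj.mpr (add_right_cancel (cancel _ _ hh)))

lemma goodF_fin (n : ℕ) (hn : 3 ≤ n) : ∃ f : Fin n → Fin n → Fin n, GoodF f := by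
  rcases Nat.even_or_odd n with he | ho
  · obtain ⟨k, hk⟩ := he
    have hm : Odd (n - 1) := ⟨k - 1, by omega⟩
    obtain ⟨F, hF⟩ := goodF_even (n - 1) hm (by omega)
    haveI : NeZero (n - 1) := ⟨by omega⟩
    have hcard : Fintype.card (Option (ZMod (n - 1))) = n := by
      rw [Fintype.card_option, ZMod.card]
      omega
    exact ⟨_, hF.transport ((Fintype.equivFinOfCardEq hcard).symm)⟩
  · haveI : NeZero n := ⟨by omega⟩
    obtain ⟨f, hf⟩ := goodF_zmod_odd n ho
    exact ⟨_, hf.transport ((Fintype.equivFinOfCardEq (ZMod.card n)).symm)⟩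

end GoodF

lemma fin2_cases : ∀ i : Fin 2, i = 0 ∨ i = 1 := by decide

theorem Kn_tensor_K2_typeI (n : ℕ) (hn : 3 ≤ n) :
    totalChromaticNumber (tensorProd (⊤ : SimpleGraph (Fin n)) (⊤ : SimpleGraph (Fin 2))) = n ∧
    (tensorProd (⊤ : SimpleGraph (Fin n)) (⊤ : SimpleGraph (Fin 2))).maxDegree = n - 1 := by
  haveI : NeZero n := ⟨by omega⟩
  set G := tensorProd (⊤ : SimpleGraph (Fin n)) (⊤ : SimpleGraph (Fin 2)) with hG
  have hadj : ∀ u v : Fin n × Fin 2, G.Adj u v ↔ u.1 ≠ v.1 ∧ u.2 ≠ v.2 := by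
    intro u v
    simp [hG, tensorProd, top_adj]
  -- the good edge-colouring function
  obtain ⟨f, hf1, hf2, hf3⟩ := goodF_fin n hn
  set cv : Fin n × Fin 2 → Fin n := fun u => u.1 with hcv
  set ce : Fin n × Fin 2 → Fin n × Fin 2 → Fin n :=
    fun u v => if u.2 = 0 then f u.1 v.1 else f v.1 u.1 with hce
  have hmem : IsTotalColoring G n cv ce := by
    refine ⟨?_, ?_, ?_, ?_⟩
    · intro u v huv
      obtain ⟨h1, h2⟩ := (hadj u v).mp huv
      rcases fin2_cases u.2 with hu | hu
      · have hv : v.2 ≠ 0 := by rw [← hu]; exact fun hh => h2 hh.symm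
        simp [hce, hu, hv]
      · have hu0 : u.2 ≠ 0 := by rw [hu]; decide
        have hv : v.2 = 0 := by
          rcases fin2_cases v.2 with hv | hv
          · exact hv
          · exact absurd (hu.trans hv.symm) h2
        simp [hce, hu0, hv]
    · intro u v huv
      exact ((hadj u v).mp huv).1
    · intro u v w huv huw hvw
      obtain ⟨h1, h2⟩ := (hadj u v).mp huv
      obtain ⟨h3, h4⟩ := (hadj u w).mp huw
      have hvw2 : v.2 = w.2 := by
        rcases fin2_cases u.2 with hu | hu <;>
          rcases fin2_cases v.2 with hv | hv <;>
          rcases fin2_cases w.2 with hw | hw <;>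
          first
            | (exact hv.trans hw.symm)
            | (exact absurd (hu.trans hv.symm) h2)
            | (exact absurd (hu.trans hw.symm) h4)
      have hvw1 : v.1 ≠ w.1 := by
        intro hh
        exact hvw (Prod.ext hh hvw2)
      by_cases hu : u.2 = 0
      · simpa [hce, hu] using
          hf2 u.1 v.1 w.1 (fun hh => h1 hh.symm) (fun hh => h3 hh.symm) hvw1
      · simpa [hce, hu] using
          hf3 v.1 w.1 u.1 (fun hh => h1 hh.symm) (fun hh => h3 hh.symm) hvw1
    · intro u v huv
      obtain ⟨h1, h2⟩ := (hadj u v).mp huv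
      by_cases hu : u.2 = 0
      · obtain ⟨p, q⟩ := hf1 u.1 v.1 h1
        exact ⟨by simpa [hce, hu] using p, by simpa [hce, hu] using q⟩
      · obtain ⟨p, q⟩ := hf1 v.1 u.1 (fun hh => h1 hh.symm)
        exact ⟨by simpa [hce, hu] using q, by simpa [hce, hu] using p⟩
  have hmemS : n ∈ {k | ∃ cv ce, IsTotalColoring G k cv ce} := ⟨cv, ce, hmem⟩
  have hlow : ∀ k ∈ {k | ∃ cv ce, IsTotalColoring G k cv ce}, n ≤ k := by
    rintro k ⟨cv', ce', hsym, hv, he, hev⟩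
    have hn0 : 0 < n := by omega
    have hinj : Function.Injective
        (fun i : Fin n => if i = 0 then cv' ((0 : Fin n), (0 : Fin 2))
          else ce' ((0 : Fin n), (0 : Fin 2)) (i, (1 : Fin 2))) := by
      intro i j hij
      by_cases hi : i = 0 <;> by_cases hj : j = 0 <;>
        simp only [hi, hj, if_pos, if_neg, ite_true, ite_false] at hij
      · rw [hi, hj]
      · exfalso
        have hadj' : G.Adj (0, 0) (j, 1) := by
          rw [hadj]
          exact ⟨fun hh => hj hh.symm, (by decide : (0 : Fin 2) ≠ (1 : Fin 2))⟩
        exact (hev _ _ hadj').1 hij.symm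
      · exfalso
        have hadj' : G.Adj (0, 0) (i, 1) := by
          rw [hadj]
          exact ⟨fun hh => hi hh.symm, (by decide : (0 : Fin 2) ≠ (1 : Fin 2))⟩
        exact (hev _ _ hadj').1 hij
      · by_contra hne
        have hadj1 : G.Adj (0, 0) (i, 1) := by
          rw [hadj]
          exact ⟨fun hh => hi hh.symm, (by decide : (0 : Fin 2) ≠ (1 : Fin 2))⟩
        have hadj2 : G.Adj (0, 0) (j, 1) := by
          rw [hadj]
          exact ⟨fun hh => hj hh.symm, (by decide : (0 : Fin 2) ≠ (1 : Fin 2))⟩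
        have hne' : (i, (1 : Fin 2)) ≠ (j, (1 : Fin 2)) := by
          intro hh
          exact hne (congrArg Prod.fst hh)
        exact he _ _ _ hadj1 hadj2 hne' hij
    have := Fintype.card_le_of_injective _ hinj
    simpa using this
  constructor
  · exact le_antisymm (Nat.sInf_le hmemS) (le_csInf ⟨n, hmemS⟩ hlow)
  · have hdeg : ∀ v : Fin n × Fin 2, G.degree v = n - 1 := by
      intro v
      have hnb : G.neighborFinset v = ({v.1}ᶜ : Finset (Fin n)) ×ˢ ({v.2}ᶜ : Finset (Fin 2)) := by
        ext w
        simp only [SimpleGraph.mem_neighborFinset, hadj, Finset.mem_product, Finset.mem_compl,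
          Finset.mem_singleton]
        exact and_congr ⟨fun h hh => h hh.symm, fun h hh => h hh.symm⟩
          ⟨fun h hh => h hh.symm, fun h hh => h hh.symm⟩
      rw [SimpleGraph.degree, hnb, Finset.card_product, Finset.card_compl, Finset.card_compl]
      simp
    refine le_antisymm (G.maxDegree_le_of_forall_degree_le _ fun v => (hdeg v).le) ?_
    calc n - 1 = G.degree ((0 : Fin n), (0 : Fin 2)) := (hdeg _).symm
      _ ≤ G.maxDegree := G.degree_le_maxDegree _
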